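/- Let z* be the unique dual optimal solution and y* the unique sketched dual optimal solution, and set Δ = y* − z*. Then ⟨A P_S Aᵀ Δ, Δ⟩ + (λ/μ)‖Δ‖₂² ≤ ⟨A P_S^⊥ Aᵀ z*, Δ⟩. -/

import Mathlib

open Matrix Finset Real Set

noncomputable section

namespace Sketch

/-- The ℓ2 norm of a vector in `Fin k → ℝ`. -/
def norm2 {k : ℕ} (x : Fin k → ℝ) : ℝ := Real.sqrt (∑ i, x i ^ 2)

/-- The continuous linear functional `v ↦ ⟨w, v⟩`; used to state that a function has
gradient `w` at a point. -/
def dotCLM {k : ℕ} (w : Fin k → ℝ) : (Fin k → ℝ) →L[ℝ] ℝ :=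
  LinearMap.toContinuousLinearMap
    { toFun := fun v => w ⬝ᵥ v
      map_add' := fun a b => dotProduct_add w a b
      map_smul' := fun c a => by
        simp [dotProduct, Finset.mul_sum, mul_left_comm] }

/-- The domain of the Fenchel conjugate `f*`. -/
def fenchelDom {k : ℕ} (f : (Fin k → ℝ) → ℝ) : Set (Fin k → ℝ) :=
  {z | BddAbove (Set.range fun w => w ⬝ᵥ z - f w)}

/-- The Fenchel conjugate `f*(z) = sup_w (⟨w, z⟩ - f(w))` (as a real-valued supremum,
meaningful on `fenchelDom f`). -/
def fenchel {k : ℕ} (f : (Fin k → ℝ) → ℝ) (z : Fin k → ℝ) : ℝ :=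
  ⨆ w, (w ⬝ᵥ z - f w)

/-- The subdifferential of the Fenchel conjugate `f*` at `z`. -/
def fenchelSubdiff {k : ℕ} (f : (Fin k → ℝ) → ℝ) (z : Fin k → ℝ) : Set (Fin k → ℝ) :=
  {g | ∀ y ∈ fenchelDom f, fenchel f z + g ⬝ᵥ (y - z) ≤ fenchel f y}

/-- `P` is the orthogonal projector onto the range (column space) of `S`. -/
def IsOrthProj {q m : ℕ} (S : Matrix (Fin q) (Fin m) ℝ) (P : Matrix (Fin q) (Fin q) ℝ) : Prop :=
  Pᵀ = P ∧ P * P = P ∧ P * S = S ∧ ∃ C : Matrix (Fin m) (Fin q) ℝ, P = S * C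

/-- The quantity `Z_f`: the supremum of `(Δᵀ B P⊥ Bᵀ Δ)^{1/2} / ‖Δ‖₂` over nonzero
`Δ ∈ dom f* - z*`. -/
def Zf {k q : ℕ} (f : (Fin k → ℝ) → ℝ) (B : Matrix (Fin k) (Fin q) ℝ)
    (Pperp : Matrix (Fin q) (Fin q) ℝ) (zs : Fin k → ℝ) : ℝ :=
  sSup {r | ∃ Δ : Fin k → ℝ, Δ ≠ 0 ∧ zs + Δ ∈ fenchelDom f ∧
    r = Real.sqrt (Δ ⬝ᵥ (B * Pperp * Bᵀ).mulVec Δ) / norm2 Δ}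

/-- The spectral norm (largest singular value) of a matrix. -/
def specNorm {a b : ℕ} (M : Matrix (Fin a) (Fin b) ℝ) : ℝ :=
  sSup {r | ∃ v : Fin b → ℝ, norm2 v = 1 ∧ r = norm2 (M.mulVec v)}

/-- The eigenvalues of `A * Aᵀ` (i.e. the squared singular values of `A`),
sorted in decreasing order. -/
def eigsDesc {n d : ℕ} (A : Matrix (Fin n) (Fin d) ℝ) : Fin n → ℝ := fun i =>
  ((Matrix.isHermitian_mul_conjTranspose_self A).eigenvalues ∘
    Tuple.sort (Matrix.isHermitian_mul_conjTranspose_self A).eigenvalues) i.rev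

/-- The spectral tail `R_k(A) = (σ_k² + (1/k) ∑_{j=k+1}^ρ σ_j²)^{1/2}`. -/
def Rk {n d : ℕ} (A : Matrix (Fin n) (Fin d) ℝ) (k : ℕ) : ℝ :=
  Real.sqrt ((∑ j : Fin n, if (j : ℕ) + 1 = k then eigsDesc A j else 0)
    + (1 / (k : ℝ)) * ∑ j : Fin n, if k ≤ (j : ℕ) then eigsDesc A j else 0)

/-- Product measure on `n × m` matrices with i.i.d. standard Gaussian entries. -/
def gaussMatrix (n m : ℕ) : MeasureTheory.Measure (Fin n → Fin m → ℝ) :=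
  MeasureTheory.Measure.pi fun _ => MeasureTheory.Measure.pi fun _ =>
    ProbabilityTheory.gaussianReal 0 1


/-- The largest eigenvalue (Rayleigh quotient supremum) of a symmetric matrix. -/
def eigMax {q : ℕ} (M : Matrix (Fin q) (Fin q) ℝ) : ℝ :=
  sSup {r | ∃ v : Fin q → ℝ, norm2 v = 1 ∧ r = v ⬝ᵥ M.mulVec v}

/-- The smallest eigenvalue (Rayleigh quotient infimum) of a symmetric matrix. -/
def eigMin {q : ℕ} (M : Matrix (Fin q) (Fin q) ℝ) : ℝ :=
  sInf {r | ∃ v : Fin q → ℝ, norm2 v = 1 ∧ r = v ⬝ᵥ M.mulVec v}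



section Aux

lemma norm2_nonneg {k : ℕ} (x : Fin k → ℝ) : 0 ≤ norm2 x := Real.sqrt_nonneg _

lemma norm2_sq {k : ℕ} (x : Fin k → ℝ) : norm2 x ^ 2 = x ⬝ᵥ x := by
  rw [norm2, Real.sq_sqrt (by positivity)]
  simp [dotProduct, sq]

lemma norm2_smul {k : ℕ} (t : ℝ) (x : Fin k → ℝ) : norm2 (t • x) = |t| * norm2 x := by
  rw [norm2, norm2, ← Real.sqrt_sq_eq_abs, ← Real.sqrt_mul (sq_nonneg t), Finset.mul_sum]
  congr 1
  exact Finset.sum_congr rfl fun i _ => by simp [mul_pow]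

lemma cauchy {k : ℕ} (u v : Fin k → ℝ) : u ⬝ᵥ v ≤ norm2 u * norm2 v :=
  Real.sum_mul_le_sqrt_mul_sqrt _ _ _

lemma dotCLM_apply {k : ℕ} (w v : Fin k → ℝ) : dotCLM w v = w ⬝ᵥ v := rfl

variable {n : ℕ} {f : (Fin n → ℝ) → ℝ} {f' : (Fin n → ℝ) → Fin n → ℝ}

lemma lineDeriv (hdiff : ∀ w, HasFDerivAt f (dotCLM (f' w)) w) (a u : Fin n → ℝ) (t : ℝ) :
    HasDerivAt (fun s : ℝ => f (a + s • u)) (f' (a + t • u) ⬝ᵥ u) t := by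
  have hc : HasDerivAt (fun s : ℝ => a + s • u) u t := by
    simpa using ((hasDerivAt_id t).smul_const u).const_add a
  have := (hdiff (a + t • u)).comp_hasDerivAt t hc
  exact this

/-- one-sided slope bound: if ψ t ≤ ψ 0 + t C for small positive t, then ψ'(0) ≤ C. -/
lemma deriv_le_of_slope (ψ : ℝ → ℝ) (D C : ℝ) (h : HasDerivAt ψ D 0)
    (hb : ∀ t : ℝ, 0 < t → t ≤ 1 → ψ t ≤ ψ 0 + t * C) : D ≤ C := by
  have htend : Filter.Tendsto (slope ψ 0) (nhdsWithin 0 (Set.Ioi 0)) (nhds D) :=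
    (hasDerivAt_iff_tendsto_slope.1 h).mono_left
      (nhdsWithin_mono _ fun x hx => ne_of_gt hx)
  refine le_of_tendsto htend ?_
  filter_upwards [Ioo_mem_nhdsGT_of_mem (Set.left_mem_Ico.2 one_pos)] with t ht
  have h1 := hb t ht.1 ht.2.le
  rw [slope_def_field, sub_zero, div_le_iff₀ ht.1]
  linarith [h1]

lemma deriv_ge_of_slope (ψ : ℝ → ℝ) (D C : ℝ) (h : HasDerivAt ψ D 0)
    (hb : ∀ t : ℝ, 0 < t → t ≤ 1 → ψ 0 + t * C ≤ ψ t) : C ≤ D := by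
  have := deriv_le_of_slope (fun t => -ψ t) (-D) (-C) h.neg
    (fun t ht ht1 => by have := hb t ht ht1; simp; linarith)
  linarith

/-- Gradient inequality for convex differentiable functions. -/
lemma grad_ineq (hconv : ConvexOn ℝ Set.univ f)
    (hdiff : ∀ w, HasFDerivAt f (dotCLM (f' w)) w) (v w : Fin n → ℝ) :
    f v + f' v ⬝ᵥ (w - v) ≤ f w := by
  have hD : HasDerivAt (fun s : ℝ => f (v + s • (w - v))) (f' v ⬝ᵥ (w - v)) 0 := by
    simpa using lineDeriv hdiff v (w - v) 0
  have := deriv_le_of_slope _ _ (f w - f v) hD (fun t ht ht1 => by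
    have hcx := hconv.2 (Set.mem_univ v) (Set.mem_univ w)
      (by linarith : (0:ℝ) ≤ 1 - t) ht.le (by ring)
    have hpt : (1 - t) • v + t • w = v + t • (w - v) := by
      ext i; simp; ring
    rw [hpt] at hcx
    simp only [smul_eq_mul, zero_smul, zero_add] at hcx ⊢
    simpa using by linarith [hcx])
  linarith [this]

/-- Descent lemma: `f b ≤ f a + ⟨f'(a), b-a⟩ + (μ/2)‖b-a‖²`. -/
lemma descent (hμ : 0 < μ)
    (hdiff : ∀ w, HasFDerivAt f (dotCLM (f' w)) w)
    (hsmooth : ∀ w v, norm2 (f' w - f' v) ≤ μ * norm2 (w - v))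
    (a b : Fin n → ℝ) :
    f b ≤ f a + f' a ⬝ᵥ (b - a) + μ / 2 * norm2 (b - a) ^ 2 := by
  set u := b - a with hu
  set N := norm2 u with hN
  set ψ : ℝ → ℝ := fun t => f (a + t • u) with hψ
  set h : ℝ → ℝ := fun t => ψ t - ψ 0 - t * (f' a ⬝ᵥ u) - μ / 2 * t ^ 2 * N ^ 2 with hh
  have hderiv : ∀ t : ℝ, HasDerivAt h (f' (a + t • u) ⬝ᵥ u - f' a ⬝ᵥ u - μ * t * N ^ 2) t := by
    intro t
    have h1 := lineDeriv hdiff a u t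
    have h2 : HasDerivAt (fun s : ℝ => ψ s - ψ 0 - s * (f' a ⬝ᵥ u) - μ / 2 * s ^ 2 * N ^ 2)
        (f' (a + t • u) ⬝ᵥ u - f' a ⬝ᵥ u - μ / 2 * (2 * t) * N ^ 2) t := by
      have hq : HasDerivAt (fun s : ℝ => μ / 2 * s ^ 2 * N ^ 2) (μ / 2 * (2 * t) * N ^ 2) t := by
        have : HasDerivAt (fun s : ℝ => s ^ 2) (2 * t) t := by
          simpa using (hasDerivAt_pow 2 t)
        exact (this.const_mul (μ / 2)).mul_const (N ^ 2)
      have := (((h1.sub_const (ψ 0)).sub ((hasDerivAt_id t).mul_const (f' a ⬝ᵥ u))).sub hq)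
      rw [one_mul] at this; exact this
    convert h2 using 1
    ring
  have hnonpos : ∀ t ∈ Set.Ioo (0:ℝ) 1,
      f' (a + t • u) ⬝ᵥ u - f' a ⬝ᵥ u - μ * t * N ^ 2 ≤ 0 := by
    intro t ht
    have h1 : f' (a + t • u) ⬝ᵥ u - f' a ⬝ᵥ u = (f' (a + t • u) - f' a) ⬝ᵥ u := by
      simp [sub_dotProduct]
    have h2 : (f' (a + t • u) - f' a) ⬝ᵥ u ≤ norm2 (f' (a + t • u) - f' a) * N := by
      exact cauchy _ _
    have h3 : norm2 (f' (a + t • u) - f' a) ≤ μ * (t * N) := by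
      have := hsmooth (a + t • u) a
      have he : a + t • u - a = t • u := by ext i; simp
      rw [he, norm2_smul, abs_of_pos ht.1] at this
      linarith [this]
    nlinarith [norm2_nonneg u, ht.1, h2, h3,
      mul_le_mul_of_nonneg_right h3 (norm2_nonneg u)]
  have hanti : AntitoneOn h (Set.Icc 0 1) := by
    apply antitoneOn_of_deriv_nonpos (convex_Icc 0 1)
    · exact (Differentiable.continuous fun t => (hderiv t).differentiableAt).continuousOn
    · intro t ht
      exact (hderiv t).differentiableAt.differentiableWithinAt
    · intro t ht
      rw [interior_Icc] at ht
      rw [(hderiv t).deriv]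
      exact hnonpos t ht
  have h10 : h 1 ≤ h 0 := hanti (Set.left_mem_Icc.2 zero_le_one)
      (Set.right_mem_Icc.2 zero_le_one) zero_le_one
  have h0 : h 0 = 0 := by simp [hh]
  have h1v : ψ 1 = f b := by simp [hψ, hu]
  have h0v : ψ 0 = f a := by simp [hψ]
  have := h10
  rw [h0] at this
  simp only [hh, one_pow, one_mul] at this
  rw [h1v, h0v] at this
  linarith [this]

lemma descent_strong (hμ : 0 < μ) (hconv : ConvexOn ℝ Set.univ f)
    (hdiff : ∀ w, HasFDerivAt f (dotCLM (f' w)) w)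
    (hsmooth : ∀ w v, norm2 (f' w - f' v) ≤ μ * norm2 (w - v))
    (a b : Fin n → ℝ) :
    f a + f' a ⬝ᵥ (b - a) + 1 / (2 * μ) * norm2 (f' b - f' a) ^ 2 ≤ f b := by
  set g := f' b - f' a with hg
  set w := b - μ⁻¹ • g with hw
  have h1 : f a + f' a ⬝ᵥ (w - a) ≤ f w := grad_ineq hconv hdiff a w
  have h2 : f w ≤ f b + f' b ⬝ᵥ (w - b) + μ / 2 * norm2 (w - b) ^ 2 :=
    descent hμ hdiff hsmooth b w
  have hwb : w - b = (-μ⁻¹) • g := by ext i; simp [hw]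
  have hwa : w - a = (b - a) - μ⁻¹ • g := by ext i; simp [hw]; ring
  have e1 : norm2 (w - b) ^ 2 = μ⁻¹ ^ 2 * norm2 g ^ 2 := by
    rw [hwb, norm2_smul, abs_neg, abs_of_pos (inv_pos.2 hμ)]; ring
  have e1' : μ / 2 * norm2 (w - b) ^ 2 = 1 / (2 * μ) * norm2 g ^ 2 := by
    rw [e1]; field_simp; try ring
  have e2 : f' b ⬝ᵥ (w - b) = -(μ⁻¹ * (f' b ⬝ᵥ g)) := by
    rw [hwb, dotProduct_smul]; simp
  have e3 : f' a ⬝ᵥ (w - a) = f' a ⬝ᵥ (b - a) - μ⁻¹ * (f' a ⬝ᵥ g) := by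
    rw [hwa, dotProduct_sub, dotProduct_smul]; simp
  have e4 : μ⁻¹ * (f' b ⬝ᵥ g) - μ⁻¹ * (f' a ⬝ᵥ g) = μ⁻¹ * norm2 g ^ 2 := by
    rw [← mul_sub]
    congr 1
    rw [norm2_sq, hg, sub_dotProduct]
  have hid : μ⁻¹ * norm2 g ^ 2 - 1 / (2 * μ) * norm2 g ^ 2 = 1 / (2 * μ) * norm2 g ^ 2 := by
    have : (μ:ℝ) ≠ 0 := ne_of_gt hμ
    field_simp
    ring
  linarith [h1, h2, e1', e2, e3, e4, hid]

lemma norm2_sub_comm {k : ℕ} (x y : Fin k → ℝ) : norm2 (x - y) = norm2 (y - x) := by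
  have : x - y = (-1 : ℝ) • (y - x) := by ext i; simp
  rw [this, norm2_smul]; simp

lemma cocoercive (hμ : 0 < μ) (hconv : ConvexOn ℝ Set.univ f)
    (hdiff : ∀ w, HasFDerivAt f (dotCLM (f' w)) w)
    (hsmooth : ∀ w v, norm2 (f' w - f' v) ≤ μ * norm2 (w - v))
    (a b : Fin n → ℝ) :
    1 / μ * norm2 (f' b - f' a) ^ 2 ≤ (f' b - f' a) ⬝ᵥ (b - a) := by
  have h1 := descent_strong hμ hconv hdiff hsmooth a b
  have h2 := descent_strong hμ hconv hdiff hsmooth b a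
  rw [norm2_sub_comm (f' a) (f' b)] at h2
  have e1 : f' b ⬝ᵥ (a - b) = -(f' b ⬝ᵥ (b - a)) := by
    rw [← dotProduct_neg]; congr 1; ext i; simp
  have e2 : (f' b - f' a) ⬝ᵥ (b - a) = f' b ⬝ᵥ (b - a) - f' a ⬝ᵥ (b - a) := by
    rw [sub_dotProduct]
  have hhalf : 1 / (2 * μ) + 1 / (2 * μ) = 1 / μ := by
    rw [← two_mul, one_div, one_div, mul_inv, ← mul_assoc, mul_inv_cancel₀ two_ne_zero, one_mul]
  have hhalf' : 1 / (2 * μ) * norm2 (f' b - f' a) ^ 2 + 1 / (2 * μ) * norm2 (f' b - f' a) ^ 2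
      = 1 / μ * norm2 (f' b - f' a) ^ 2 := by rw [← add_mul, hhalf]
  linarith [h1, h2, e1, e2, hhalf']

lemma fenchel_le {z : Fin n → ℝ} (hz : z ∈ fenchelDom f) (w : Fin n → ℝ) :
    w ⬝ᵥ z - f w ≤ fenchel f z :=
  le_ciSup hz w

lemma fenchel_comb {z1 z2 : Fin n → ℝ} (h1 : z1 ∈ fenchelDom f) (h2 : z2 ∈ fenchelDom f)
    {t : ℝ} (ht0 : 0 ≤ t) (ht1 : t ≤ 1) :
    (1 - t) • z1 + t • z2 ∈ fenchelDom f ∧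
      fenchel f ((1 - t) • z1 + t • z2) ≤ (1 - t) * fenchel f z1 + t * fenchel f z2 := by
  have key : ∀ w : Fin n → ℝ, w ⬝ᵥ ((1 - t) • z1 + t • z2) - f w
      ≤ (1 - t) * fenchel f z1 + t * fenchel f z2 := by
    intro w
    have e : w ⬝ᵥ ((1 - t) • z1 + t • z2) - f w
        = (1 - t) * (w ⬝ᵥ z1 - f w) + t * (w ⬝ᵥ z2 - f w) := by
      rw [dotProduct_add, dotProduct_smul, dotProduct_smul]
      simp only [smul_eq_mul]
      ring
    rw [e]
    have b1 := fenchel_le h1 w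
    have b2 := fenchel_le h2 w
    have c1 := mul_le_mul_of_nonneg_left b1 (by linarith : (0:ℝ) ≤ 1 - t)
    have c2 := mul_le_mul_of_nonneg_left b2 ht0
    linarith
  constructor
  · exact ⟨(1 - t) * fenchel f z1 + t * fenchel f z2, by rintro r ⟨w, rfl⟩; exact key w⟩
  · exact ciSup_le key

/-- Optimality of the regularized problem yields a subgradient inequality for `fenchel f`. -/
lemma opt_subgrad {d' : ℕ} (B : Matrix (Fin d') (Fin n) ℝ) {lam : ℝ} (hlam : 0 < lam)
    {zs : Fin n → ℝ} (hzsdom : zs ∈ fenchelDom f)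
    (hopt : ∀ z ∈ fenchelDom f,
      fenchel f zs + 1 / (2 * lam) * norm2 (B.mulVec zs) ^ 2
        ≤ fenchel f z + 1 / (2 * lam) * norm2 (B.mulVec z) ^ 2)
    (y : Fin n → ℝ) (hy : y ∈ fenchelDom f) :
    fenchel f zs + ((-(1 / lam)) • ((Bᵀ * B).mulVec zs)) ⬝ᵥ (y - zs) ≤ fenchel f y := by
  set Δ := y - zs with hΔ
  set c := 1 / (2 * lam) with hc
  have hcpos : 0 < c := by positivity
  set X := B.mulVec zs ⬝ᵥ B.mulVec Δ with hX
  set Y := norm2 (B.mulVec Δ) ^ 2 with hY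
  have hY0 : 0 ≤ Y := sq_nonneg _
  -- key inequality for every t ∈ (0,1]
  have key : ∀ t : ℝ, 0 < t → t ≤ 1 →
      fenchel f zs ≤ fenchel f y + 2 * c * X + c * t * Y := by
    intro t ht0 ht1
    obtain ⟨hdomt, hcomb⟩ := fenchel_comb hzsdom hy ht0.le ht1
    have hpt : (1 - t) • zs + t • y = zs + t • Δ := by
      ext i; simp [hΔ]; ring
    have hquad : norm2 (B.mulVec (zs + t • Δ)) ^ 2
        = norm2 (B.mulVec zs) ^ 2 + 2 * t * X + t ^ 2 * Y := by
      rw [hX, hY, norm2_sq, norm2_sq, norm2_sq, Matrix.mulVec_add, Matrix.mulVec_smul]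
      rw [add_dotProduct, dotProduct_add, dotProduct_add]
      rw [smul_dotProduct, smul_dotProduct, dotProduct_smul,
        dotProduct_smul]
      have := dotProduct_comm (B.mulVec Δ) (B.mulVec zs)
      simp only [smul_eq_mul, hX]
      rw [this]
      ring
    have hot := hopt _ (hpt ▸ hdomt)
    rw [hpt] at hcomb
    rw [hquad] at hot
    have step : t * fenchel f zs ≤ t * fenchel f y + 2 * c * t * X + c * t ^ 2 * Y := by
      nlinarith [hot, hcomb]
    have := (mul_le_mul_iff_right₀ ht0).1 (by nlinarith [step] :
      t * fenchel f zs ≤ t * (fenchel f y + 2 * c * X + c * t * Y))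
    linarith [this]
  -- pass to the limit t → 0⁺
  have lim : fenchel f zs ≤ fenchel f y + 2 * c * X := by
    refine le_of_forall_pos_le_add fun ε hε => ?_
    set t := min 1 (ε / (c * Y + 1)) with htdef
    have hden : 0 < c * Y + 1 := by positivity
    have ht0 : 0 < t := lt_min one_pos (div_pos hε hden)
    have ht1 : t ≤ 1 := min_le_left _ _
    have h2 : c * t * Y ≤ ε := by
      have h3 : t ≤ ε / (c * Y + 1) := min_le_right _ _
      have h4 : c * t * Y ≤ (ε / (c * Y + 1)) * (c * Y) := by
        have := mul_le_mul_of_nonneg_right h3 (by positivity : (0:ℝ) ≤ c * Y)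
        calc c * t * Y = t * (c * Y) := by ring
          _ ≤ _ := this
      have h5 : (ε / (c * Y + 1)) * (c * Y) ≤ ε := by
        rw [div_mul_eq_mul_div, div_le_iff₀ hden]
        nlinarith [hε.le]
      linarith
    linarith [key t ht0 ht1, h2]
  -- rewrite the inner product
  have hdot : ((-(1 / lam)) • ((Bᵀ * B).mulVec zs)) ⬝ᵥ Δ = -(2 * c * X) := by
    rw [smul_dotProduct]
    have e1 : (Bᵀ * B).mulVec zs = Bᵀ.mulVec (B.mulVec zs) := by
      rw [← Matrix.mulVec_mulVec]
    have e2 : Bᵀ.mulVec (B.mulVec zs) ⬝ᵥ Δ = B.mulVec zs ⬝ᵥ B.mulVec Δ := by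
      rw [Matrix.mulVec_transpose, ← Matrix.dotProduct_mulVec]
    rw [e1, e2, ← hX]
    have : 2 * c = 1 / lam := by rw [hc]; field_simp
    simp only [smul_eq_mul]
    rw [← this]
    ring
  rw [hdot]
  linarith [lim]

/-- If `s` is a subgradient of `fenchel f` at `z ∈ dom`, then `f'(s) = z`. -/
lemma subgrad_fgrad (hconv : ConvexOn ℝ Set.univ f)
    (hdiff : ∀ w, HasFDerivAt f (dotCLM (f' w)) w)
    {z s : Fin n → ℝ} (hz : z ∈ fenchelDom f)
    (hsub : ∀ y ∈ fenchelDom f, fenchel f z + s ⬝ᵥ (y - z) ≤ fenchel f y) :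
    f' s = z := by
  set z' := f' s with hz'
  -- the sup defining `fenchel f z'` is attained at `w = s`
  have hbound : ∀ w : Fin n → ℝ, w ⬝ᵥ z' - f w ≤ s ⬝ᵥ z' - f s := by
    intro w
    have hgi := grad_ineq hconv hdiff s w
    have e1 : z' ⬝ᵥ (w - s) = z' ⬝ᵥ w - z' ⬝ᵥ s := dotProduct_sub _ _ _
    have e2 : z' ⬝ᵥ w = w ⬝ᵥ z' := dotProduct_comm _ _
    have e3 : z' ⬝ᵥ s = s ⬝ᵥ z' := dotProduct_comm _ _
    linarith [hgi]
  have hz'dom : z' ∈ fenchelDom f := ⟨s ⬝ᵥ z' - f s, by rintro r ⟨w, rfl⟩; exact hbound w⟩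
  have hval : fenchel f z' = s ⬝ᵥ z' - f s :=
    le_antisymm (ciSup_le hbound) (fenchel_le hz'dom s)
  -- Fenchel–Young equality at (s, z)
  have hFY1 : f s ≤ s ⬝ᵥ z - fenchel f z := by
    have := hsub z' hz'dom
    rw [hval] at this
    have e1 : s ⬝ᵥ (z' - z) = s ⬝ᵥ z' - s ⬝ᵥ z := dotProduct_sub _ _ _
    linarith [this]
  -- z is a subgradient of f at s
  have hsubf : ∀ w : Fin n → ℝ, f s + z ⬝ᵥ (w - s) ≤ f w := by
    intro w
    have hw := fenchel_le hz w
    have e1 : z ⬝ᵥ (w - s) = z ⬝ᵥ w - z ⬝ᵥ s := dotProduct_sub _ _ _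
    have e2 : z ⬝ᵥ w = w ⬝ᵥ z := dotProduct_comm _ _
    have e3 : z ⬝ᵥ s = s ⬝ᵥ z := dotProduct_comm _ _
    linarith [hw, hFY1]
  -- hence z = f'(s) by differentiability
  have hdir : ∀ u : Fin n → ℝ, z ⬝ᵥ u ≤ f' s ⬝ᵥ u := by
    intro u
    have hD : HasDerivAt (fun t : ℝ => f (s + t • u)) (f' s ⬝ᵥ u) 0 := by
      simpa using lineDeriv hdiff s u 0
    refine deriv_ge_of_slope _ _ _ hD fun t ht0 ht1 => ?_
    have := hsubf (s + t • u)
    have e1 : z ⬝ᵥ (s + t • u - s) = t * (z ⬝ᵥ u) := by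
      have : s + t • u - s = t • u := by ext i; simp
      rw [this, dotProduct_smul]; simp
    simp only [zero_smul, add_zero]
    linarith [this, e1.symm.le, e1.le]
  have heq : ∀ u : Fin n → ℝ, f' s ⬝ᵥ u = z ⬝ᵥ u := by
    intro u
    have h1 := hdir u
    have h2 := hdir (-u)
    rw [dotProduct_neg, dotProduct_neg] at h2
    linarith
  have hzero : (f' s - z) ⬝ᵥ (f' s - z) = 0 := by
    rw [sub_dotProduct]
    rw [heq (f' s - z)]
    ring
  have := dotProduct_self_eq_zero.1 hzero
  have := sub_eq_zero.1 this
  exact this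

end Aux

/-- key dual inequality: with `zs` the dual optimal solution, `ys` the
sketched dual optimal solution and `Δ = ys - zs`, it holds that
`⟨A P_S Aᵀ Δ, Δ⟩ + (λ/μ) ‖Δ‖₂² ≤ ⟨A P_S^⊥ Aᵀ zs, Δ⟩`. -/
theorem statement_4 {n d m : ℕ} (f : (Fin n → ℝ) → ℝ) (f' : (Fin n → ℝ) → Fin n → ℝ)
    (A : Matrix (Fin n) (Fin d) ℝ) (μ lam : ℝ)
    (hμ : 0 < μ) (hlam : 0 < lam)
    (hconv : ConvexOn ℝ Set.univ f)
    (hdiff : ∀ w, HasFDerivAt f (dotCLM (f' w)) w)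
    (hsmooth : ∀ w v, norm2 (f' w - f' v) ≤ μ * norm2 (w - v))
    (S : Matrix (Fin d) (Fin m) ℝ) (P : Matrix (Fin d) (Fin d) ℝ)
    (hP : IsOrthProj S P)
    (zs : Fin n → ℝ) (hzsdom : zs ∈ fenchelDom f)
    (hzs : ∀ z ∈ fenchelDom f,
      fenchel f zs + 1 / (2 * lam) * norm2 (Aᵀ.mulVec zs) ^ 2
        ≤ fenchel f z + 1 / (2 * lam) * norm2 (Aᵀ.mulVec z) ^ 2)
    (ys : Fin n → ℝ) (hysdom : ys ∈ fenchelDom f)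
    (hys : ∀ y ∈ fenchelDom f,
      fenchel f ys + 1 / (2 * lam) * norm2 ((P * Aᵀ).mulVec ys) ^ 2
        ≤ fenchel f y + 1 / (2 * lam) * norm2 ((P * Aᵀ).mulVec y) ^ 2) :
    (A * P * Aᵀ).mulVec (ys - zs) ⬝ᵥ (ys - zs) + lam / μ * norm2 (ys - zs) ^ 2
      ≤ (A * (1 - P) * Aᵀ).mulVec zs ⬝ᵥ (ys - zs) := by
  classical
  -- subgradient optimality conditions
  have hAA : Aᵀᵀ * Aᵀ = A * Aᵀ := by rw [Matrix.transpose_transpose]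
  have hBB : (P * Aᵀ)ᵀ * (P * Aᵀ) = A * P * Aᵀ := by
    rw [Matrix.transpose_mul, Matrix.transpose_transpose, hP.1,
      Matrix.mul_assoc A P (P * Aᵀ), ← Matrix.mul_assoc P P Aᵀ, hP.2.1, ← Matrix.mul_assoc]
  have hsubz : ∀ y ∈ fenchelDom f,
      fenchel f zs + ((-(1 / lam)) • ((A * Aᵀ).mulVec zs)) ⬝ᵥ (y - zs) ≤ fenchel f y := by
    have := opt_subgrad Aᵀ hlam hzsdom hzs
    rwa [hAA] at this
  have hsuby : ∀ y ∈ fenchelDom f,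
      fenchel f ys + ((-(1 / lam)) • ((A * P * Aᵀ).mulVec ys)) ⬝ᵥ (y - ys) ≤ fenchel f y := by
    have := opt_subgrad (P * Aᵀ) hlam hysdom hys
    rwa [hBB] at this
  set sz := (-(1 / lam)) • ((A * Aᵀ).mulVec zs) with hsz
  set sy := (-(1 / lam)) • ((A * P * Aᵀ).mulVec ys) with hsy
  have hz' : f' sz = zs := subgrad_fgrad hconv hdiff hzsdom hsubz
  have hy' : f' sy = ys := subgrad_fgrad hconv hdiff hysdom hsuby
  have hco := cocoercive hμ hconv hdiff hsmooth sz sy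
  rw [hz', hy'] at hco
  set Δ := ys - zs with hΔ
  set D1 := Δ ⬝ᵥ ((A * P * Aᵀ).mulVec ys) with hD1
  set D2 := Δ ⬝ᵥ ((A * Aᵀ).mulVec zs) with hD2
  have hdot : Δ ⬝ᵥ (sy - sz) = (1 / lam) * (D2 - D1) := by
    rw [hsy, hsz, ← smul_sub, dotProduct_smul, dotProduct_sub, hD1, hD2]
    simp only [smul_eq_mul]
    ring
  rw [hdot] at hco
  have key : lam / μ * norm2 Δ ^ 2 ≤ D2 - D1 := by
    have h1 := mul_le_mul_of_nonneg_left hco hlam.le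
    have e1 : lam * (1 / lam * (D2 - D1)) = D2 - D1 := by field_simp
    have e2 : lam * (1 / μ * norm2 Δ ^ 2) = lam / μ * norm2 Δ ^ 2 := by ring
    linarith [h1, e1, e2]
  have hexp : A * (1 - P) * Aᵀ = A * Aᵀ - A * P * Aᵀ := by
    rw [Matrix.mul_sub, Matrix.mul_one, Matrix.sub_mul]
  have e1 : (A * (1 - P) * Aᵀ).mulVec zs ⬝ᵥ Δ
      = (A * Aᵀ).mulVec zs ⬝ᵥ Δ - (A * P * Aᵀ).mulVec zs ⬝ᵥ Δ := by
    rw [hexp, Matrix.sub_mulVec, sub_dotProduct]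
  have e2 : (A * P * Aᵀ).mulVec Δ ⬝ᵥ Δ
      = (A * P * Aᵀ).mulVec ys ⬝ᵥ Δ - (A * P * Aᵀ).mulVec zs ⬝ᵥ Δ := by
    rw [hΔ, Matrix.mulVec_sub, sub_dotProduct]
  have c1 : (A * P * Aᵀ).mulVec ys ⬝ᵥ Δ = D1 := dotProduct_comm _ _
  have c2 : (A * Aᵀ).mulVec zs ⬝ᵥ Δ = D2 := dotProduct_comm _ _
  linarith [key, e1, e2, c1, c2]


end Sketch
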